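/- For all real δ with 0 < δ ≤ 1/e, the integral ∫₀^δ sqrt((1/t)·log(1/t)) dt is at most 4·sqrt(δ·log(1/δ)). -/

import Mathlib

open MeasureTheory

/-- Observation (Gamma-integral bound, `y = 0` case): for `0 < δ ≤ 1/e`,
`∫₀^δ √((1/t)·log(1/t)) dt ≤ 4·√(δ·log(1/δ))`. -/
theorem integral_sqrt_log_le (δ : ℝ) (hδ0 : 0 < δ) (hδ : δ ≤ 1 / Real.exp 1) :
    ∫ t in Set.Ioc (0 : ℝ) δ, Real.sqrt ((1 / t) * Real.log (1 / t)) ≤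
      4 * Real.sqrt (δ * Real.log (1 / δ)) := by
  set a : ℝ := Real.log (1 / δ) with ha_def
  have ha1 : 1 ≤ a := by
    rw [ha_def, Real.le_log_iff_exp_le (by positivity)]
    rw [le_div_iff₀ hδ0, mul_comm, ← le_div_iff₀ (Real.exp_pos 1)]
    exact hδ
  have ha0 : (0 : ℝ) < a := lt_of_lt_of_le one_pos ha1
  have hsa : (0 : ℝ) < Real.sqrt a := Real.sqrt_pos.2 ha0
  -- the antiderivative
  set G : ℝ → ℝ := fun t => 2 * Real.sqrt (-(t * Real.log t)) + 2 * Real.sqrt t / Real.sqrt a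
    with hG_def
  set G' : ℝ → ℝ := fun t => (Real.log (1 / t) - 1) / Real.sqrt (t * Real.log (1 / t))
      + 1 / (Real.sqrt t * Real.sqrt a) with hG'_def
  have hGcont : Continuous G := by
    apply Continuous.add
    · exact (continuous_const.mul (Real.continuous_sqrt.comp Real.continuous_mul_log.neg))
    · exact (continuous_const.mul Real.continuous_sqrt).div_const _
  -- basic facts on (0, δ]
  have hLfact : ∀ x ∈ Set.Ioc (0:ℝ) δ, a ≤ Real.log (1 / x) ∧ 0 < x := by
    intro x hx
    refine ⟨?_, hx.1⟩
    rw [ha_def]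
    apply Real.log_le_log (by positivity)
    exact one_div_le_one_div_of_le hx.1 hx.2
  have hderiv : ∀ x ∈ Set.Ioo (0:ℝ) δ, HasDerivAt G (G' x) x := by
    intro x hx
    obtain ⟨hLa, hx0⟩ := hLfact x ⟨hx.1, hx.2.le⟩
    have hL0 : 0 < Real.log (1 / x) := lt_of_lt_of_le ha0 hLa
    have hxL : 0 < x * Real.log (1 / x) := mul_pos hx0 hL0
    have h1 : HasDerivAt (fun t : ℝ => -(t * Real.log t)) (Real.log (1/x) - 1) x := by
      have := (Real.hasDerivAt_mul_log (ne_of_gt hx0)).fun_neg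
      refine this.congr_deriv ?_
      rw [one_div, Real.log_inv]; ring
    have hne : -(x * Real.log x) ≠ 0 := by
      rw [show -(x * Real.log x) = x * Real.log (1/x) by rw [one_div, Real.log_inv]; ring]
      exact ne_of_gt hxL
    have h2 : HasDerivAt (fun t : ℝ => 2 * Real.sqrt (-(t * Real.log t)))
        (2 * ((Real.log (1/x) - 1) / (2 * Real.sqrt (-(x * Real.log x))))) x :=
      (h1.sqrt hne).const_mul 2
    have h3 : HasDerivAt (fun t : ℝ => 2 * Real.sqrt t / Real.sqrt a)
        (2 * (1 / (2 * Real.sqrt x)) / Real.sqrt a) x :=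
      ((Real.hasDerivAt_sqrt (ne_of_gt hx0)).const_mul 2).div_const _
    have := h2.fun_add h3
    refine this.congr_deriv ?_
    rw [hG'_def]
    have hsx : 0 < Real.sqrt x := Real.sqrt_pos.2 hx0
    have hrw : -(x * Real.log x) = x * Real.log (1/x) := by
      rw [one_div, Real.log_inv]; ring
    rw [hrw]
    have hsxL : 0 < Real.sqrt (x * Real.log (1/x)) := Real.sqrt_pos.2 hxL
    field_simp
  have hG'nonneg : ∀ x ∈ Set.Ioo (0:ℝ) δ, 0 ≤ G' x := by
    intro x hx
    obtain ⟨hLa, hx0⟩ := hLfact x ⟨hx.1, hx.2.le⟩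
    have hL1 : 1 ≤ Real.log (1 / x) := le_trans ha1 hLa
    have h1 : 0 ≤ (Real.log (1 / x) - 1) / Real.sqrt (x * Real.log (1 / x)) := by
      apply div_nonneg (by linarith) (Real.sqrt_nonneg _)
    have h2 : 0 ≤ 1 / (Real.sqrt x * Real.sqrt a) := by positivity
    exact add_nonneg h1 h2
  -- pointwise bound
  have hle : ∀ x ∈ Set.Ioc (0:ℝ) δ, Real.sqrt ((1 / x) * Real.log (1 / x)) ≤ G' x := by
    intro x hx
    obtain ⟨hLa, hx0⟩ := hLfact x hx
    have hL0 : 0 < Real.log (1 / x) := lt_of_lt_of_le ha0 hLa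
    have hsx : 0 < Real.sqrt x := Real.sqrt_pos.2 hx0
    have hsL : 0 < Real.sqrt (Real.log (1 / x)) := Real.sqrt_pos.2 hL0
    have hLHS : Real.sqrt ((1 / x) * Real.log (1 / x))
        = Real.sqrt (Real.log (1 / x)) / Real.sqrt x := by
      rw [mul_comm, Real.sqrt_mul hL0.le, one_div, Real.sqrt_inv, ← div_eq_mul_inv]
    have key : Real.sqrt (Real.log (1 / x)) ≤
        (Real.log (1 / x) - 1) / Real.sqrt (Real.log (1 / x)) + 1 / Real.sqrt a := by
      have h1 : (Real.log (1 / x) - 1) / Real.sqrt (Real.log (1 / x))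
          = Real.sqrt (Real.log (1 / x)) - 1 / Real.sqrt (Real.log (1 / x)) := by
        rw [eq_sub_iff_add_eq, div_add_div _ _ (ne_of_gt hsL) (ne_of_gt hsL)]
        rw [Real.mul_self_sqrt hL0.le]
        field_simp
        ring
      rw [h1]
      have h2 : 1 / Real.sqrt (Real.log (1 / x)) ≤ 1 / Real.sqrt a :=
        one_div_le_one_div_of_le hsa (Real.sqrt_le_sqrt hLa)
      linarith
    have hRHS : G' x = ((Real.log (1 / x) - 1) / Real.sqrt (Real.log (1 / x))
        + 1 / Real.sqrt a) / Real.sqrt x := by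
      show (Real.log (1 / x) - 1) / Real.sqrt (x * Real.log (1 / x))
          + 1 / (Real.sqrt x * Real.sqrt a) = _
      rw [Real.sqrt_mul hx0.le]
      field_simp
    rw [hLHS, hRHS]
    gcongr
  -- integrability of G'
  have hG'int : IntegrableOn G' (Set.Ioc 0 δ) :=
    intervalIntegral.integrableOn_deriv_of_nonneg hGcont.continuousOn hderiv hG'nonneg
  -- integrability of integrand
  have hmeas : AEStronglyMeasurable (fun t => Real.sqrt ((1 / t) * Real.log (1 / t)))
      (volume.restrict (Set.Ioc (0:ℝ) δ)) := by
    have hm : Measurable fun t : ℝ => (1 / t) * Real.log (1 / t) :=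
      (measurable_const.div measurable_id).mul
        (Real.measurable_log.comp (measurable_const.div measurable_id))
    exact (Real.continuous_sqrt.measurable.comp hm).aestronglyMeasurable
  have hint : IntegrableOn (fun t => Real.sqrt ((1 / t) * Real.log (1 / t))) (Set.Ioc 0 δ) := by
    apply hG'int.mono' hmeas
    filter_upwards [ae_restrict_mem measurableSet_Ioc] with x hx
    rw [Real.norm_eq_abs, abs_of_nonneg (Real.sqrt_nonneg _)]
    exact hle x hx
  -- compare integrals
  have step1 : ∫ t in Set.Ioc (0:ℝ) δ, Real.sqrt ((1 / t) * Real.log (1 / t))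
      ≤ ∫ t in Set.Ioc (0:ℝ) δ, G' t :=
    setIntegral_mono_on hint hG'int measurableSet_Ioc hle
  have step2 : ∫ t in Set.Ioc (0:ℝ) δ, G' t = G δ - G 0 := by
    rw [← intervalIntegral.integral_of_le hδ0.le]
    exact intervalIntegral.integral_eq_sub_of_hasDeriv_right_of_le hδ0.le hGcont.continuousOn
      (fun x hx => (hderiv x hx).hasDerivWithinAt)
      ((intervalIntegrable_iff_integrableOn_Ioc_of_le hδ0.le).2 hG'int)
  have hG0 : G 0 = 0 := by simp [hG_def]
  have hGδ : G δ - G 0 ≤ 4 * Real.sqrt (δ * a) := by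
    rw [hG0, sub_zero, hG_def]
    show 2 * Real.sqrt (-(δ * Real.log δ)) + 2 * Real.sqrt δ / Real.sqrt a
        ≤ 4 * Real.sqrt (δ * a)
    have hrw : -(δ * Real.log δ) = δ * a := by
      rw [ha_def, one_div, Real.log_inv]; ring
    rw [hrw, Real.sqrt_mul hδ0.le]
    have hsδ : 0 ≤ Real.sqrt δ := Real.sqrt_nonneg _
    have hsa1 : 1 ≤ Real.sqrt a := by
      rw [show (1:ℝ) = Real.sqrt 1 by simp]
      exact Real.sqrt_le_sqrt ha1
    have h2 : 2 * Real.sqrt δ / Real.sqrt a ≤ 2 * (Real.sqrt δ * Real.sqrt a) := by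
      rw [div_le_iff₀ hsa]
      nlinarith [Real.mul_self_sqrt ha0.le, hsa1, hsδ, ha1]
    linarith
  calc ∫ t in Set.Ioc (0:ℝ) δ, Real.sqrt ((1 / t) * Real.log (1 / t))
      ≤ ∫ t in Set.Ioc (0:ℝ) δ, G' t := step1
    _ = G δ - G 0 := step2
    _ ≤ 4 * Real.sqrt (δ * a) := hGδ
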